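/- Let ℓ₀ be an odd prime with ℓ₀ ≠ 5, and let p be a prime such that p² divides (4^{ℓ₀}+1)(2^{ℓ₀}−1). Then p is a Wieferich prime, that is, 2^{p−1} ≡ 1 (mod p²). -/
import Mathlib

lemma wieferich_aux (p : ℕ) (hp : p.Prime) (hp2 : p ≠ 2) (m : ℕ) (hpm : ¬ p ∣ m)
    (h : (2 : ZMod (p ^ 2)) ^ m = 1) : 2 ^ (p - 1) ≡ 1 [MOD p ^ 2] := by
  haveI : NeZero (p ^ 2) := ⟨pow_ne_zero 2 hp.pos.ne'⟩
  have hcop2 : Nat.Coprime 2 (p ^ 2) :=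
    Nat.Coprime.pow_right 2 ((Nat.coprime_primes Nat.prime_two hp).mpr (Ne.symm hp2))
  set u := ZMod.unitOfCoprime 2 hcop2 with hu
  have hcoe : ((u : (ZMod (p ^ 2))ˣ) : ZMod (p ^ 2)) = 2 := by
    simp [hu, ZMod.coe_unitOfCoprime]
  have hdm : orderOf u ∣ m := by
    apply orderOf_dvd_of_pow_eq_one
    ext
    push_cast [hcoe]
    exact h
  have hdφ : orderOf u ∣ (p ^ 2).totient :=
    orderOf_dvd_of_pow_eq_one (ZMod.pow_totient u)
  have htot : (p ^ 2).totient = p * (p - 1) := by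
    rw [Nat.totient_prime_pow hp (by norm_num : 0 < 2)]
    norm_num
  rw [htot] at hdφ
  have hpd : ¬ p ∣ orderOf u := fun hd => hpm (hd.trans hdm)
  have hdp1 : orderOf u ∣ p - 1 :=
    Nat.Coprime.dvd_of_dvd_mul_left ((hp.coprime_iff_not_dvd.mpr hpd).symm) hdφ
  have h1 : (2 : ZMod (p ^ 2)) ^ (p - 1) = 1 := by
    have := orderOf_dvd_iff_pow_eq_one.mp hdp1
    have := congrArg (Units.val) this
    push_cast [hcoe] at this
    exact this
  have : ((2 ^ (p - 1) : ℕ) : ZMod (p ^ 2)) = ((1 : ℕ) : ZMod (p ^ 2)) := by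
    push_cast
    exact h1
  exact (ZMod.natCast_eq_natCast_iff _ _ _).mp this

/-- Let `ℓ₀` be an odd prime with `ℓ₀ ≠ 5`, and let `p` be a prime such that `p²` divides
`(4 ^ ℓ₀ + 1) * (2 ^ ℓ₀ - 1)`.  Then `p` is a Wieferich prime, i.e.
`2 ^ (p - 1) ≡ 1 (mod p²)`. -/
theorem wieferich_of_sq_dvd
    (ℓ₀ : ℕ) (hℓ : ℓ₀.Prime) (hodd : Odd ℓ₀) (hne : ℓ₀ ≠ 5)
    (p : ℕ) (hp : p.Prime) (hdvd : p ^ 2 ∣ (4 ^ ℓ₀ + 1) * (2 ^ ℓ₀ - 1)) :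
    2 ^ (p - 1) ≡ 1 [MOD p ^ 2] := by
  haveI := Fact.mk hp
  have h2ℓ : (1 : ℕ) ≤ 2 ^ ℓ₀ := Nat.one_le_two_pow
  have hoddb : Odd (2 ^ ℓ₀ - 1) :=
    Nat.Even.sub_odd h2ℓ (Nat.even_pow.mpr ⟨even_two, hℓ.pos.ne'⟩) odd_one
  have hodda : Odd (4 ^ ℓ₀ + 1) :=
    Even.add_one (Nat.even_pow.mpr ⟨by decide, hℓ.pos.ne'⟩)
  have hp2 : p ≠ 2 := by
    rintro rfl
    have h2 : 2 ∣ (4 ^ ℓ₀ + 1) * (2 ^ ℓ₀ - 1) :=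
      (dvd_pow_self 2 two_ne_zero).trans hdvd
    rcases (Nat.even_mul.mp (even_iff_two_dvd.mpr h2)) with h | h
    · exact (Nat.not_even_iff_odd.mpr hodda) h
    · exact (Nat.not_even_iff_odd.mpr hoddb) h
  have hneℓ : p ≠ ℓ₀ → ¬ p ∣ ℓ₀ := fun hne' hd =>
    hne' ((Nat.prime_dvd_prime_iff_eq hp hℓ).mp hd)
  -- coprimality of the two factors
  have hcop : Nat.Coprime (4 ^ ℓ₀ + 1) (2 ^ ℓ₀ - 1) := by
    obtain ⟨y, hy⟩ : ∃ y, 2 ^ ℓ₀ = y + 1 := ⟨2 ^ ℓ₀ - 1, by omega⟩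
    have key : 4 ^ ℓ₀ + 1 = (2 ^ ℓ₀ - 1) * (2 ^ ℓ₀ + 1) + 2 := by
      have h4 : 4 ^ ℓ₀ = 2 ^ ℓ₀ * 2 ^ ℓ₀ := by
        rw [← mul_pow]; norm_num
      rw [h4, hy]
      simp only [Nat.add_sub_cancel]
      ring
    set g := Nat.gcd (4 ^ ℓ₀ + 1) (2 ^ ℓ₀ - 1) with hg
    have hga : g ∣ 4 ^ ℓ₀ + 1 := Nat.gcd_dvd_left _ _
    have hgb : g ∣ 2 ^ ℓ₀ - 1 := Nat.gcd_dvd_right _ _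
    have hg2 : g ∣ 2 := by
      have : g ∣ (2 ^ ℓ₀ - 1) * (2 ^ ℓ₀ + 1) := hgb.mul_right _
      have := Nat.dvd_sub hga this
      rwa [key, Nat.add_sub_cancel_left] at this
    rcases (Nat.dvd_prime Nat.prime_two).mp hg2 with h | h
    · exact h
    · exfalso
      rw [h] at hgb
      exact (Nat.not_even_iff_odd.mpr hoddb) (even_iff_two_dvd.mpr hgb)
  have hpdvd : p ∣ (4 ^ ℓ₀ + 1) * (2 ^ ℓ₀ - 1) := (dvd_pow_self p two_ne_zero).trans hdvd
  rcases (hp.dvd_mul.mp hpdvd) with hpa | hpb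
  · -- p ∣ 4 ^ ℓ₀ + 1, so p ∤ 2 ^ ℓ₀ - 1, so p ^ 2 ∣ 4 ^ ℓ₀ + 1
    have hnb : ¬ p ∣ 2 ^ ℓ₀ - 1 := by
      intro hb
      have : p ∣ Nat.gcd (4 ^ ℓ₀ + 1) (2 ^ ℓ₀ - 1) := Nat.dvd_gcd hpa hb
      rw [hcop] at this
      have h1 := Nat.dvd_one.mp this
      have := hp.two_le
      omega
    have hcop' : Nat.Coprime (p ^ 2) (2 ^ ℓ₀ - 1) :=
      Nat.Coprime.pow_left 2 (hp.coprime_iff_not_dvd.mpr hnb)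
    have ha : p ^ 2 ∣ 4 ^ ℓ₀ + 1 := hcop'.dvd_of_dvd_mul_right hdvd
    -- p ≠ ℓ₀
    have hpℓ : p ≠ ℓ₀ := by
      rintro rfl
      have h5 : ((4 ^ p + 1 : ℕ) : ZMod p) = 0 :=
        (ZMod.natCast_eq_zero_iff _ _).mpr hpa
      push_cast at h5
      rw [ZMod.pow_card] at h5
      have : ((5 : ℕ) : ZMod p) = 0 := by push_cast; linear_combination h5
      have := (ZMod.natCast_eq_zero_iff _ _).mp this
      have := (Nat.prime_dvd_prime_iff_eq hp (by norm_num)).mp this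
      exact hne (this ▸ rfl)
    -- (2 : ZMod (p^2)) ^ (4 * ℓ₀) = 1
    haveI : NeZero (p ^ 2) := ⟨pow_ne_zero 2 hp.pos.ne'⟩
    have h4 : ((4 ^ ℓ₀ + 1 : ℕ) : ZMod (p ^ 2)) = 0 :=
      (ZMod.natCast_eq_zero_iff _ _).mpr ha
    push_cast at h4
    have h4' : (4 : ZMod (p ^ 2)) ^ ℓ₀ = -1 := by linear_combination h4
    have hpow : (2 : ZMod (p ^ 2)) ^ (4 * ℓ₀) = 1 := by
      have : (4 : ℕ) * ℓ₀ = 2 * ℓ₀ * 2 := by ring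
      rw [this, pow_mul, pow_mul]
      norm_num [h4']
    apply wieferich_aux p hp hp2 (4 * ℓ₀) _ hpow
    intro hd
    rcases (Nat.Prime.dvd_mul hp).mp hd with h | h
    · have h4 : (4 : ℕ) = 2 ^ 2 := by norm_num
      rw [h4] at h
      have : p ∣ 2 := hp.dvd_of_dvd_pow h
      exact hp2 ((Nat.prime_dvd_prime_iff_eq hp Nat.prime_two).mp this)
    · exact hneℓ hpℓ h
  · -- p ∣ 2 ^ ℓ₀ - 1
    have hna : ¬ p ∣ 4 ^ ℓ₀ + 1 := by
      intro hb
      have : p ∣ Nat.gcd (4 ^ ℓ₀ + 1) (2 ^ ℓ₀ - 1) := Nat.dvd_gcd hb hpb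
      rw [hcop] at this
      have h1 := Nat.dvd_one.mp this
      have := hp.two_le
      omega
    have hcop' : Nat.Coprime (p ^ 2) (4 ^ ℓ₀ + 1) :=
      Nat.Coprime.pow_left 2 (hp.coprime_iff_not_dvd.mpr hna)
    have hb : p ^ 2 ∣ 2 ^ ℓ₀ - 1 := hcop'.dvd_of_dvd_mul_left hdvd
    have hpℓ : p ≠ ℓ₀ := by
      rintro rfl
      have h1 : ((2 ^ p - 1 : ℕ) : ZMod p) = 0 :=
        (ZMod.natCast_eq_zero_iff _ _).mpr hpb
      rw [Nat.cast_sub h2ℓ] at h1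
      push_cast at h1
      rw [ZMod.pow_card] at h1
      have h2 : ((1 : ℕ) : ZMod p) = 0 := by push_cast; linear_combination h1
      have h3 := Nat.dvd_one.mp ((ZMod.natCast_eq_zero_iff _ _).mp h2)
      have := hp.two_le
      omega
    haveI : NeZero (p ^ 2) := ⟨pow_ne_zero 2 hp.pos.ne'⟩
    have h1 : ((2 ^ ℓ₀ - 1 : ℕ) : ZMod (p ^ 2)) = 0 :=
      (ZMod.natCast_eq_zero_iff _ _).mpr hb
    rw [Nat.cast_sub h2ℓ] at h1
    push_cast at h1
    have hpow : (2 : ZMod (p ^ 2)) ^ ℓ₀ = 1 := by linear_combination h1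
    exact wieferich_aux p hp hp2 ℓ₀ (hneℓ hpℓ) hpow
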